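/- arXiv:2312.12790 — 10 statements merged into one kernel-verified Lean document; each statement's English description precedes it below -/
import Mathlib

section
/- Let n and r be positive integers, let E be an n×r real matrix of rank r (full column rank), let S be an r×n real matrix of rank r (full row rank), and set P = E·S. Then an n×n real matrix Φ satisfies the Born identity S·Φ·E = I_r if and only if Φ is a {1}-inverse of P, i.e. P·Φ·P = P. -/
open Matrix

lemma isUnit_of_rank_eq {r : ℕ} (A : Matrix (Fin r) (Fin r) ℝ) (hA : A.rank = r) :
    IsUnit A := by
  rw [← Matrix.mulVec_surjective_iff_isUnit]
  have hrange : LinearMap.range A.mulVecLin = ⊤ := by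
    apply Submodule.eq_top_of_finrank_eq
    rw [Matrix.rank] at hA
    simp [hA]
  intro v
  have := hrange ▸ Submodule.mem_top (x := v) (R := ℝ)
  obtain ⟨x, hx⟩ := this
  exact ⟨x, hx⟩

/-- For `E` an `n×r` real matrix of full column rank and `S` an `r×n`
real matrix of full row rank, with `P = E * S`, a matrix `Φ` satisfies the Born
identity `S * Φ * E = 1` iff `Φ` is a `{1}`-inverse of `P`, i.e. `P * Φ * P = P`. -/
theorem born_identity_iff_one_inverse
    (n r : ℕ) (hn : 0 < n) (hr : 0 < r)
    (E : Matrix (Fin n) (Fin r) ℝ) (hE : E.rank = r)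
    (S : Matrix (Fin r) (Fin n) ℝ) (hS : S.rank = r)
    (P : Matrix (Fin n) (Fin n) ℝ) (hP : P = E * S)
    (Φ : Matrix (Fin n) (Fin n) ℝ) :
    S * Φ * E = 1 ↔ P * Φ * P = P := by
  subst hP
  constructor
  · intro h
    calc E * S * Φ * (E * S) = E * (S * Φ * E) * S := by
          simp only [Matrix.mul_assoc]
      _ = E * S := by rw [h, Matrix.mul_one]
  · intro h
    -- Left inverse of E
    have hEE : IsUnit (Eᵀ * E) := by
      apply isUnit_of_rank_eq
      have : (Eᴴ * E).rank = E.rank := Matrix.rank_conjTranspose_mul_self E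
      simpa [Matrix.conjTranspose_eq_transpose_of_trivial, hE] using this
    have hSS : IsUnit (S * Sᵀ) := by
      apply isUnit_of_rank_eq
      have : (S * Sᴴ).rank = S.rank := Matrix.rank_self_mul_conjTranspose S
      simpa [Matrix.conjTranspose, hS] using this
    obtain ⟨U, hU⟩ := hEE.exists_left_inv
    obtain ⟨V, hV⟩ := hSS.exists_right_inv
    set L := U * Eᵀ with hL
    set R := Sᵀ * V with hR
    have hLE : L * E = 1 := by rw [hL, Matrix.mul_assoc]; exact hU
    have hSR : S * R = 1 := by rw [hR, ← Matrix.mul_assoc]; exact hV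
    calc S * Φ * E = 1 * (S * Φ * E) * 1 := by rw [Matrix.one_mul, Matrix.mul_one]
      _ = (L * E) * (S * Φ * E) * (S * R) := by rw [hLE, hSR]
      _ = L * (E * S * Φ * (E * S)) * R := by simp only [Matrix.mul_assoc]
      _ = L * (E * S) * R := by rw [h]
      _ = (L * E) * (S * R) := by simp only [Matrix.mul_assoc]
      _ = 1 := by rw [hLE, hSR, one_mul]
end

section
/- Let r ≥ 1, let A be an r×(r−1) real matrix with uᵀA = 0 (u ∈ ℝʳ the all-ones vector), let w ∈ ℝʳ with uᵀw = 1, let α ≠ 0 be real, and let X be an (r−1)×r real matrix with X·w = 0 and X·A = (1/α)·I_{r−1}. Then the self-conditional probability matrix P = w·uᵀ + A·X satisfies P = (1/α)·I_r + (1 − 1/α)·w·uᵀ. In particular, if the measurement is unbiased, i.e. w = (1/r)·u, then P is equiangular: P_ii = 1/α + (1 − 1/α)/r for all i, and P_ij = (1 − 1/α)/r for all i ≠ j. -/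
open Matrix

/-- Under the depolarizing conditions, the self-conditional
probability matrix `P = w·uᵀ + A·X` equals `(1/α)·I + (1 − 1/α)·w·uᵀ`; in the
unbiased case `w = (1/r)·u`, `P` is equiangular. -/
theorem self_conditional_matrix_equiangular
    (r : ℕ) (hr : 1 ≤ r)
    (A : Matrix (Fin r) (Fin (r - 1)) ℝ) (hA : ∀ j, ∑ i, A i j = 0)
    (w : Fin r → ℝ) (hw : ∑ i, w i = 1)
    (α : ℝ) (hα : α ≠ 0)
    (X : Matrix (Fin (r - 1)) (Fin r) ℝ)
    (hXw : X.mulVec w = 0) (hXA : X * A = α⁻¹ • 1)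
    (P : Matrix (Fin r) (Fin r) ℝ)
    (hP : P = Matrix.vecMulVec w (fun _ => 1) + A * X) :
    P = α⁻¹ • 1 + (1 - α⁻¹) • Matrix.vecMulVec w (fun _ => 1) ∧
    (w = (fun _ => 1 / (r : ℝ)) →
      (∀ i, P i i = 1 / α + (1 - 1 / α) / r) ∧
      (∀ i j, i ≠ j → P i j = (1 - 1 / α) / r)) := by
  -- Block matrices B = [w | A] and Y = [uᵀ ; αX]
  have e : Sum (Fin 1) (Fin (r - 1)) ≃ Fin r := finSumFinEquiv.trans (finCongr (by omega))
  set B : Matrix (Fin r) (Sum (Fin 1) (Fin (r - 1))) ℝ :=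
    Matrix.of fun i => Sum.elim (fun _ => w i) (fun k => A i k) with hB
  set Y : Matrix (Sum (Fin 1) (Fin (r - 1))) (Fin r) ℝ :=
    Matrix.of (Sum.elim (fun _ _ => (1 : ℝ)) (fun k j => α * X k j)) with hY
  have hYB : Y * B = 1 := by
    ext a b
    cases a with
    | inl a =>
      cases b with
      | inl b =>
        simp [hY, hB, Matrix.mul_apply, Matrix.one_apply, hw,
          Fin.fin_one_eq_zero a, Fin.fin_one_eq_zero b]
      | inr b =>
        simp [hY, hB, Matrix.mul_apply, Matrix.one_apply, hA b]
    | inr a =>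
      cases b with
      | inl b =>
        have := congrFun hXw a
        simp only [Matrix.mulVec, dotProduct, Pi.zero_apply] at this
        simp [hY, hB, Matrix.mul_apply, Matrix.one_apply, mul_assoc,
          ← Finset.mul_sum, this]
      | inr b =>
        have := congrFun (congrFun hXA a) b
        simp only [Matrix.mul_apply, Matrix.smul_apply, Matrix.one_apply,
          smul_eq_mul] at this ⊢
        simp only [hY, hB, Matrix.of_apply, Sum.elim_inr, mul_assoc,
          ← Finset.mul_sum, this]
        rcases eq_or_ne a b with h | h <;>
          simp [h, Sum.inr.injEq, mul_inv_cancel₀ hα]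
  have hBY : B * Y = 1 := (Matrix.mul_eq_one_comm_of_equiv e).mp hYB
  have key : ∀ i j, w i + α * (A * X) i j = (1 : Matrix (Fin r) (Fin r) ℝ) i j := by
    intro i j
    have := congrFun (congrFun hBY i) j
    rw [Matrix.mul_apply, Fintype.sum_sum_type] at this
    simpa [hB, hY, mul_assoc, Matrix.mul_apply, ← Finset.mul_sum,
      mul_comm, mul_left_comm] using this
  have hAX : ∀ i j, (A * X) i j
      = α⁻¹ * ((1 : Matrix (Fin r) (Fin r) ℝ) i j - w i) := by
    intro i j
    have h := key i j
    field_simp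
    linarith [h]
  have hmain : P = α⁻¹ • 1 + (1 - α⁻¹) • Matrix.vecMulVec w (fun _ => 1) := by
    ext i j
    simp only [hP, Matrix.add_apply, Matrix.smul_apply, Matrix.vecMulVec_apply,
      smul_eq_mul, mul_one, hAX i j]
    ring
  refine ⟨hmain, fun hwr => ?_⟩
  constructor
  · intro i
    have := congrFun (congrFun hmain i) i
    simp [hwr, Matrix.one_apply, Matrix.vecMulVec_apply, one_div] at this ⊢
    rw [this]; ring
  · intro i j hij
    have := congrFun (congrFun hmain i) j
    simp [hwr, Matrix.one_apply, hij, Matrix.vecMulVec_apply, one_div] at this ⊢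
    rw [this]; ring
end

section
/- Let d ≥ 2, let S₁, …, Sₙ be d×d complex matrices each with trace 1 and with squared Frobenius norm 1 (i.e. ∑_{i,j} |Sₘ[i,j]|² = 1, corresponding to pure states), let t₁, …, tₙ be real numbers with ∑ₘ tₘ·Sₘ = I_d, and let α be a nonzero real number. Suppose the d²×d² matrix C with entries C_{(i,j),(k,l)} = ∑ₘ Sₘ[i,j] · conj(tₘ·Sₘ[k,l]) satisfies C = (1/α)·I_{d²} + (1 − 1/α)·(1/d)·J, where J is the d²×d² matrix with entries J_{(i,j),(k,l)} = δ_{ij}·δ_{kl}. Then α = d + 1. -/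
open Matrix

/-- For a pure weight-morphophoric reference device in complex
quantum theory (post-measurement states `Sₘ` of trace 1 and unit Frobenius norm,
effects `tₘ·Sₘ` resolving the identity), if the channel operator
`C_{(i,j),(k,l)} = ∑ₘ Sₘ[i,j]·conj(tₘ·Sₘ[k,l])` is depolarizing,
`C = (1/α)·I + (1 − 1/α)·(1/d)·J`, then `α = d + 1`. -/
theorem pure_weight_morphophoric_alpha
    (d n : ℕ) (hd : 2 ≤ d)
    (S : Fin n → Matrix (Fin d) (Fin d) ℂ)
    (htr : ∀ m, (S m).trace = 1)
    (hfrob : ∀ m, ∑ i, ∑ j, ‖S m i j‖ ^ 2 = 1)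
    (t : Fin n → ℝ) (hres : ∑ m, (t m : ℂ) • S m = 1)
    (α : ℝ) (hα : α ≠ 0)
    (C : Matrix (Fin d × Fin d) (Fin d × Fin d) ℂ)
    (hC : C = Matrix.of fun p q =>
      ∑ m, S m p.1 p.2 * (starRingEnd ℂ) ((t m : ℂ) * S m q.1 q.2))
    (J : Matrix (Fin d × Fin d) (Fin d × Fin d) ℂ)
    (hJ : J = Matrix.of fun p q : Fin d × Fin d =>
      (if p.1 = p.2 then 1 else 0) * (if q.1 = q.2 then 1 else 0))
    (hdep : C = ((α : ℂ))⁻¹ • 1 + ((1 - α⁻¹ : ℝ) : ℂ) • ((d : ℂ)⁻¹ • J)) :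
    α = d + 1 := by
  have hd0 : (d : ℂ) ≠ 0 := by
    exact_mod_cast (by omega : d ≠ 0)
  have hd1 : (d : ℂ) - 1 ≠ 0 := by
    have : (d : ℂ) ≠ 1 := by exact_mod_cast (by omega : d ≠ 1)
    intro h; apply this; linear_combination h
  have hαc : (α : ℂ) ≠ 0 := by exact_mod_cast hα
  -- sum of weights equals d
  have hT : ∑ m, (t m : ℂ) = (d : ℂ) := by
    have h := congrArg Matrix.trace hres
    simpa [Matrix.trace_sum, Matrix.trace_smul, htr, Matrix.trace_one,
      smul_eq_mul] using h
  -- trace of C equals sum of weights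
  have htrC : C.trace = (d : ℂ) := by
    rw [hC, ← hT]
    unfold Matrix.trace Matrix.diag
    simp only [Matrix.of_apply]
    rw [Finset.sum_comm]
    refine Finset.sum_congr rfl fun m _ => ?_
    have key : ∀ p : Fin d × Fin d,
        S m p.1 p.2 * (starRingEnd ℂ) ((t m : ℂ) * S m p.1 p.2)
          = (t m : ℂ) * ((‖S m p.1 p.2‖ ^ 2 : ℝ) : ℂ) := by
      intro p
      rw [_root_.map_mul, Complex.conj_ofReal]
      rw [show S m p.1 p.2 * ((t m : ℂ) * (starRingEnd ℂ) (S m p.1 p.2))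
          = (t m : ℂ) * (S m p.1 p.2 * (starRingEnd ℂ) (S m p.1 p.2)) by ring]
      rw [Complex.mul_conj]
      norm_cast
      rw [Complex.normSq_eq_norm_sq]
    calc ∑ p : Fin d × Fin d,
        S m p.1 p.2 * (starRingEnd ℂ) ((t m : ℂ) * S m p.1 p.2)
        = ∑ p : Fin d × Fin d, (t m : ℂ) * ((‖S m p.1 p.2‖ ^ 2 : ℝ) : ℂ) := by
          exact Finset.sum_congr rfl fun p _ => key p
      _ = (t m : ℂ) * ((∑ i, ∑ j, ‖S m i j‖ ^ 2 : ℝ) : ℂ) := by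
          rw [← Finset.mul_sum]
          push_cast
          rw [Fintype.sum_prod_type]
      _ = (t m : ℂ) := by rw [hfrob m]; simp
  -- trace of J equals d
  have htrJ : J.trace = (d : ℂ) := by
    rw [hJ]
    unfold Matrix.trace Matrix.diag
    simp [Fintype.sum_prod_type, Finset.sum_ite_eq]
  -- trace of RHS
  have htrR : C.trace = (α : ℂ)⁻¹ * (d : ℂ)^2
      + ((1 : ℂ) - (α : ℂ)⁻¹) * ((d : ℂ)⁻¹ * (d : ℂ)) := by
    rw [hdep]
    rw [Matrix.trace_add, Matrix.trace_smul, Matrix.trace_smul,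
      Matrix.trace_smul, Matrix.trace_one, htrJ]
    simp only [Fintype.card_prod, Fintype.card_fin, smul_eq_mul]
    push_cast
    ring
  -- the scalar equation
  have heq : (d : ℂ) = (α : ℂ)⁻¹ * (d : ℂ)^2 + ((1 : ℂ) - (α : ℂ)⁻¹) := by
    rw [htrC, inv_mul_cancel₀ hd0, mul_one] at htrR
    exact htrR
  have hfinal : (α : ℂ) = (d : ℂ) + 1 := by
    have h2 : (d : ℂ) * (α : ℂ) = (d : ℂ)^2 + (α : ℂ) - 1 := by
      field_simp at heq
      linear_combination heq
    have h3 : ((d : ℂ) - 1) * (α : ℂ) = ((d : ℂ) - 1) * ((d : ℂ) + 1) := by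
      ring_nf
      linear_combination h2
    exact mul_left_cancel₀ hd1 h3
  exact_mod_cast hfinal
end

section
/- Let d ≥ 1, let ψ₁, …, ψₙ ∈ ℂᵈ be unit vectors, set Sₘ = ψₘψₘ* (the d×d matrix with entries ψₘ(i)·conj(ψₘ(j))), and let t₁, …, tₙ be real numbers. Suppose the d²×d² matrix C with entries C_{(i,j),(k,l)} = ∑ₘ tₘ · Sₘ[i,j] · conj(Sₘ[k,l]) satisfies C = (1/(d+1))·(I_{d²} + J), where J_{(i,j),(k,l)} = δ_{ij}·δ_{kl}. Then, with weights wₘ = tₘ/d, the pure states form a weighted complex projective 2-design: ∑ₘ wₘ · (Sₘ ⊗ Sₘ) = (1/(d(d+1)))·(I_{d²} + SWAP), where ⊗ is the Kronecker product, (A ⊗ B)_{(i,j),(k,l)} = A[i,k]·B[j,l], and SWAP is the d²×d² matrix with entries SWAP_{(i,j),(k,l)} = δ_{il}·δ_{jk}. -/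
open Matrix Kronecker

/-- If the channel operator of a pure reference device with
post-measurement states `Sₘ = ψₘψₘ*` and effects `tₘ·Sₘ` is depolarizing with
parameter `1/(d+1)`, i.e. `C = (1/(d+1))·(I + J)`, then with weights `wₘ = tₘ/d`
the states form a weighted complex projective 2-design:
`∑ₘ wₘ·(Sₘ ⊗ Sₘ) = (1/(d(d+1)))·(I + SWAP)`. -/
theorem depolarizing_gives_two_design
    (d n : ℕ) (hd : 1 ≤ d)
    (ψ : Fin n → Fin d → ℂ) (hunit : ∀ m, ∑ i, ‖ψ m i‖ ^ 2 = 1)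
    (S : Fin n → Matrix (Fin d) (Fin d) ℂ)
    (hS : ∀ m, S m = Matrix.of fun i j => ψ m i * (starRingEnd ℂ) (ψ m j))
    (t : Fin n → ℝ)
    (C J SWAP : Matrix (Fin d × Fin d) (Fin d × Fin d) ℂ)
    (hC : C = Matrix.of fun p q =>
      ∑ m, (t m : ℂ) * S m p.1 p.2 * (starRingEnd ℂ) (S m q.1 q.2))
    (hJ : J = Matrix.of fun p q : Fin d × Fin d =>
      (if p.1 = p.2 then 1 else 0) * (if q.1 = q.2 then 1 else 0))
    (hSWAP : SWAP = Matrix.of fun p q : Fin d × Fin d =>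
      if p.1 = q.2 ∧ p.2 = q.1 then 1 else 0)
    (hdep : C = ((d : ℂ) + 1)⁻¹ • (1 + J)) :
    ∑ m, ((t m / d : ℝ) : ℂ) • (S m ⊗ₖ S m) =
      ((d : ℂ) * ((d : ℂ) + 1))⁻¹ • (1 + SWAP) := by
  have hd' : (d : ℂ) ≠ 0 := Nat.cast_ne_zero.mpr (by omega)
  have hherm : ∀ m (a b : Fin d),
      (starRingEnd ℂ) (S m a b) = S m b a := by
    intro m a b
    simp [hS, _root_.map_mul, mul_comm]
  have key : ∀ i j k l : Fin d,
      ∑ m, (t m : ℂ) * S m i k * S m j l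
        = ((d : ℂ) + 1)⁻¹ *
          ((if i = l ∧ k = j then 1 else 0) + (if i = k ∧ l = j then 1 else 0)) := by
    intro i j k l
    have h := congrFun (congrFun (hC.symm.trans hdep) (i, k)) (l, j)
    simp only [hJ, Matrix.of_apply, Matrix.smul_apply, Matrix.add_apply,
      Matrix.one_apply, smul_eq_mul, Prod.mk.injEq, Prod.ext_iff] at h
    calc ∑ m, (t m : ℂ) * S m i k * S m j l
        = ∑ m, (t m : ℂ) * S m i k * (starRingEnd ℂ) (S m l j) := by
          refine Finset.sum_congr rfl fun m _ => by rw [hherm]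
      _ = _ := by
          rw [h]
          by_cases h1 : i = l <;> by_cases h2 : k = j <;>
            by_cases h3 : i = k <;> by_cases h4 : l = j <;>
            simp [h1, h2, h3, h4]
  ext ⟨i, j⟩ ⟨k, l⟩
  simp only [Matrix.sum_apply, Finset.sum_apply, Matrix.smul_apply, Matrix.add_apply,
    Matrix.kroneckerMap_apply, hSWAP, Matrix.of_apply, Matrix.one_apply,
    smul_eq_mul, Prod.mk.injEq, Prod.ext_iff]
  have : ∑ m, ((t m / d : ℝ) : ℂ) * (S m i k * S m j l)
      = (d : ℂ)⁻¹ * ∑ m, (t m : ℂ) * S m i k * S m j l := by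
    rw [Finset.mul_sum]
    refine Finset.sum_congr rfl fun m _ => ?_
    push_cast
    field_simp
  rw [this, key i j k l, mul_inv]
  clear this key hC hJ hSWAP hdep hS hherm hunit
  by_cases h1 : i = k <;> by_cases h2 : j = l <;>
    by_cases h3 : i = l <;> by_cases h4 : j = k <;>
    simp_all [eq_comm] <;> ring
end

section
/- Let w ∈ ℝⁿ with uᵀw = 1 (u ∈ ℝⁿ the all-ones vector), let A be an n×(r−1) real matrix with uᵀA = 0, let α ≠ 0 be real, and let X be an (r−1)×n real matrix with X·w = 0 and X·A = (1/α)·I_{r−1}. Set P = w·uᵀ + A·X. Then the natural Born matrix Φ = w·uᵀ + α²·A·X is a {1}-inverse of P: P·Φ·P = P. -/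
open Matrix

/-- For a depolarizing reference device in Bloch form (bias `w`,
effect block `A`, state block `X` with `X·w = 0`, `X·A = (1/α)·I`), the natural
Born matrix `Φ = w·uᵀ + α²·A·X` is a `{1}`-inverse of `P = w·uᵀ + A·X`. -/
theorem natural_born_matrix_one_inverse
    (n r : ℕ)
    (w : Fin n → ℝ) (hw : ∑ i, w i = 1)
    (A : Matrix (Fin n) (Fin (r - 1)) ℝ) (hA : ∀ j, ∑ i, A i j = 0)
    (α : ℝ) (hα : α ≠ 0)
    (X : Matrix (Fin (r - 1)) (Fin n) ℝ)
    (hXw : X.mulVec w = 0) (hXA : X * A = α⁻¹ • 1)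
    (P : Matrix (Fin n) (Fin n) ℝ)
    (hP : P = Matrix.vecMulVec w (fun _ => 1) + A * X)
    (Φ : Matrix (Fin n) (Fin n) ℝ)
    (hΦ : Φ = Matrix.vecMulVec w (fun _ => 1) + (α ^ 2) • (A * X)) :
    P * Φ * P = P := by
  set W : Matrix (Fin n) (Fin n) ℝ := Matrix.vecMulVec w (fun _ => 1) with hW
  set M : Matrix (Fin n) (Fin n) ℝ := A * X with hM
  have hWW : W * W = W := by
    ext i j
    simp [hW, Matrix.mul_apply, Matrix.vecMulVec_apply, ← Finset.mul_sum, hw]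
  have hWA : W * A = 0 := by
    ext i j
    simp [hW, Matrix.mul_apply, Matrix.vecMulVec_apply, ← Finset.mul_sum, hA]
  have hWM : W * M = 0 := by
    rw [hM, ← Matrix.mul_assoc, hWA, Matrix.zero_mul]
  have hXW : X * W = 0 := by
    ext i j
    have := congrFun hXw i
    simp only [Matrix.mulVec, dotProduct, Pi.zero_apply] at this
    simp [hW, Matrix.mul_apply, Matrix.vecMulVec_apply, ← Finset.sum_mul, this]
  have hMW : M * W = 0 := by
    rw [hM, Matrix.mul_assoc, hXW, Matrix.mul_zero]
  have hMM : M * M = α⁻¹ • M := by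
    rw [hM, Matrix.mul_assoc, ← Matrix.mul_assoc X A X, hXA, Matrix.smul_mul,
      Matrix.one_mul, Matrix.mul_smul]
  rw [hP, hΦ]
  simp only [Matrix.mul_add, Matrix.add_mul, Matrix.mul_smul, Matrix.smul_mul,
    hWW, hWM, hMW, hMM, smul_smul, smul_zero, add_zero, zero_add]
  have h1 : α ^ 2 * α⁻¹ = α := by field_simp
  have h2 : α ^ 2 * α⁻¹ * α⁻¹ = 1 := by field_simp
  rw [h1]
  rw [mul_inv_cancel₀ hα, one_smul]
end

section
/- Let w ∈ ℝⁿ with uᵀw = 1 (u ∈ ℝⁿ the all-ones vector), let A be an n×(r−1) real matrix with uᵀA = 0, let α ≠ 0 be real, and let X be an (r−1)×n real matrix with X·w = 0 and X·A = (1/α)·I_{r−1}. Then the natural Born matrix Φ = w·uᵀ + α²·A·X acts as a Protourgleichung: for every v ∈ ℝ^{r−1}, Φ·(w + A·v) = w + α·(A·v); equivalently, for every probability vector of the form p = w + A·v, Φ·p = α·p + (1−α)·w. -/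
open Matrix

/-- The natural Born matrix `Φ = w·uᵀ + α²·A·X` acts as a
Protourgleichung: for every `v`, `Φ·(w + A·v) = w + α·(A·v)`, i.e. on probability
vectors `p = w + A·v` it acts as `p ↦ α·p + (1−α)·w`. -/
theorem natural_born_matrix_protourgleichung
    (n r : ℕ)
    (w : Fin n → ℝ) (hw : ∑ i, w i = 1)
    (A : Matrix (Fin n) (Fin (r - 1)) ℝ) (hA : ∀ j, ∑ i, A i j = 0)
    (α : ℝ) (hα : α ≠ 0)
    (X : Matrix (Fin (r - 1)) (Fin n) ℝ)
    (hXw : X.mulVec w = 0) (hXA : X * A = α⁻¹ • 1)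
    (Φ : Matrix (Fin n) (Fin n) ℝ)
    (hΦ : Φ = Matrix.vecMulVec w (fun _ => 1) + (α ^ 2) • (A * X)) :
    ∀ v : Fin (r - 1) → ℝ,
      Φ.mulVec (w + A.mulVec v) = w + α • A.mulVec v := by
  intro v
  subst hΦ
  have hs : ∑ j, (w + A.mulVec v) j = 1 := by
    simp only [Pi.add_apply]
    rw [Finset.sum_add_distrib, hw]
    simp only [mulVec, dotProduct]
    rw [Finset.sum_comm]
    simp only [← Finset.sum_mul, hA]
    simp
  have h1 : (Matrix.vecMulVec w (fun _ => 1)).mulVec (w + A.mulVec v) = w := by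
    funext i
    rw [mulVec]
    simp only [dotProduct, vecMulVec_apply, mul_one]
    rw [← Finset.mul_sum, hs, mul_one]
  have hx : X.mulVec (A.mulVec v) = α⁻¹ • v := by
    rw [mulVec_mulVec, hXA, smul_mulVec, one_mulVec]
  have h2 : (A * X).mulVec (w + A.mulVec v) = α⁻¹ • A.mulVec v := by
    rw [mulVec_add, ← mulVec_mulVec, ← mulVec_mulVec, hXw, mulVec_zero, zero_add,
      hx, mulVec_smul]
  rw [add_mulVec, h1, smul_mulVec, h2, smul_smul]
  have : α ^ 2 * α⁻¹ = α := by field_simp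
  rw [this]
end

section
/- Let n ≥ r ≥ 2, let u ∈ ℝⁿ be the all-ones vector, let A be an n×(r−1) real matrix of rank r−1 with uᵀA = 0, let α ≠ 0 be real, and let X be an (r−1)×n real matrix of rank r−1 with X·u = 0 and X·A = (1/α)·I_{r−1}. Set P = (1/n)·u·uᵀ + A·X and Φ* = I_n + ((α−1)/α)·Xᵀ·(X·Xᵀ)⁻¹·(Aᵀ·A)⁻¹·Aᵀ. Then: (1) P·Φ*·P = P; and (2) Φ* is the unique minimizer of the Frobenius norm ‖I_n − Φ‖ over all n×n real matrices Φ satisfying P·Φ·P = P, i.e. for every Ψ with P·Ψ·P = P and Ψ ≠ Φ*, one has ∑_{i,j} (I − Φ*)ᵢⱼ² < ∑_{i,j} (I − Ψ)ᵢⱼ². -/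
open Matrix

private lemma isUnit_of_rank_eq_card' {m : ℕ} (B : Matrix (Fin m) (Fin m) ℝ)
    (h : B.rank = m) : IsUnit B := by
  rw [← Matrix.mulVec_surjective_iff_isUnit]
  have hrange : LinearMap.range B.mulVecLin = ⊤ := by
    apply Submodule.eq_top_of_finrank_eq
    rw [Matrix.rank] at h
    simp [h, Module.finrank_fintype_fun_eq_card]
  have hs := LinearMap.range_eq_top.mp hrange
  exact hs

private lemma frob_inner_eq_trace {n : ℕ} (M N : Matrix (Fin n) (Fin n) ℝ) :
    ∑ i, ∑ j, M i j * N i j = (Mᵀ * N).trace := by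
  simp only [Matrix.trace, Matrix.diag, Matrix.mul_apply, Matrix.transpose_apply]
  exact Finset.sum_comm

private lemma trace_sandwich {n : ℕ} (P E Y : Matrix (Fin n) (Fin n) ℝ)
    (h : P * E * P = 0) : ((Pᵀ * Y * Pᵀ)ᵀ * E).trace = 0 := by
  have h1 : (Pᵀ * Y * Pᵀ)ᵀ * E = (P * Yᵀ) * (P * E) := by
    simp only [Matrix.transpose_mul, Matrix.transpose_transpose, Matrix.mul_assoc]
  rw [h1, Matrix.trace_mul_comm (P * Yᵀ) (P * E),
    show P * E * (P * Yᵀ) = (P * E * P) * Yᵀ by simp only [Matrix.mul_assoc],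
    h, Matrix.zero_mul, Matrix.trace_zero]

/-- For an unbiased depolarizing reference device with
`P = (1/n)·u·uᵀ + A·X`, the matrix
`Φ* = I + ((α−1)/α)·Xᵀ·(XXᵀ)⁻¹·(AᵀA)⁻¹·Aᵀ` satisfies `P·Φ*·P = P` and is the
unique minimizer of the Frobenius norm `‖I − Φ‖` over all `{1}`-inverses of `P`. -/
theorem frobenius_minimal_born_matrix
    (n r : ℕ) (hr : 2 ≤ r) (hnr : r ≤ n)
    (A : Matrix (Fin n) (Fin (r - 1)) ℝ) (hArank : A.rank = r - 1)
    (hA : ∀ j, ∑ i, A i j = 0)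
    (α : ℝ) (hα : α ≠ 0)
    (X : Matrix (Fin (r - 1)) (Fin n) ℝ) (hXrank : X.rank = r - 1)
    (hXu : X.mulVec (fun _ => 1) = 0) (hXA : X * A = α⁻¹ • 1)
    (P : Matrix (Fin n) (Fin n) ℝ)
    (hP : P = (n : ℝ)⁻¹ • Matrix.vecMulVec (fun _ => 1) (fun _ => 1) + A * X)
    (Φ : Matrix (Fin n) (Fin n) ℝ)
    (hΦ : Φ = 1 + ((α - 1) / α) • (Xᵀ * (X * Xᵀ)⁻¹ * (Aᵀ * A)⁻¹ * Aᵀ)) :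
    P * Φ * P = P ∧
    ∀ Ψ : Matrix (Fin n) (Fin n) ℝ, P * Ψ * P = P → Ψ ≠ Φ →
      ∑ i, ∑ j, ((1 - Φ) i j) ^ 2 < ∑ i, ∑ j, ((1 - Ψ) i j) ^ 2 := by
  have hn2 : 2 ≤ n := hr.trans hnr
  have hnpos : (0 : ℝ) < (n : ℝ) := by exact_mod_cast Nat.lt_of_lt_of_le Nat.zero_lt_two hn2
  have hn : (n : ℝ) ≠ 0 := hnpos.ne'
  set u : Fin n → ℝ := fun _ => 1 with hu
  set U : Matrix (Fin n) (Fin n) ℝ := vecMulVec u u with hUdef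
  set G : Matrix (Fin (r-1)) (Fin (r-1)) ℝ := X * Xᵀ with hGdef
  set H : Matrix (Fin (r-1)) (Fin (r-1)) ℝ := Aᵀ * A with hHdef
  set M : Matrix (Fin n) (Fin n) ℝ := Xᵀ * G⁻¹ * H⁻¹ * Aᵀ with hMdef
  -- basic annihilation facts
  have hUA : U * A = 0 := by
    ext i j
    simp only [hUdef, Matrix.mul_apply, vecMulVec_apply, hu, Matrix.zero_apply, one_mul]
    exact hA j
  have hAtU : Aᵀ * U = 0 := by
    ext i j
    simp only [hUdef, Matrix.mul_apply, vecMulVec_apply, Matrix.transpose_apply, hu,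
      Matrix.zero_apply, one_mul, mul_one]
    exact hA i
  have hXU : X * U = 0 := by
    ext i j
    have h0 := congrFun hXu i
    simp only [Matrix.mulVec, dotProduct, hu, mul_one, Pi.zero_apply] at h0
    simp only [hUdef, Matrix.mul_apply, vecMulVec_apply, hu, Matrix.zero_apply, one_mul,
      mul_one]
    exact h0
  have hUXt : U * Xᵀ = 0 := by
    ext i j
    have h0 := congrFun hXu j
    simp only [Matrix.mulVec, dotProduct, hu, mul_one, Pi.zero_apply] at h0
    simp only [hUdef, Matrix.mul_apply, vecMulVec_apply, Matrix.transpose_apply, hu,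
      Matrix.zero_apply, one_mul]
    exact h0
  have hUU : U * U = (n : ℝ) • U := by
    ext i j
    simp [hUdef, Matrix.mul_apply, vecMulVec_apply, hu, Finset.sum_const, Finset.card_univ]
  have hUt : Uᵀ = U := by
    ext i j
    simp [hUdef, vecMulVec_apply, hu]
  have hAtXt : Aᵀ * Xᵀ = α⁻¹ • (1 : Matrix (Fin (r-1)) (Fin (r-1)) ℝ) := by
    rw [← Matrix.transpose_mul, hXA, Matrix.transpose_smul, Matrix.transpose_one]
  -- invertibility
  have hGu : IsUnit G := by
    apply isUnit_of_rank_eq_card'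
    have hct : Xᵀ = Xᴴ := (Matrix.conjTranspose_eq_transpose_of_trivial X).symm
    rw [hGdef, hct, Matrix.rank_self_mul_conjTranspose, hXrank]
  have hHu : IsUnit H := by
    apply isUnit_of_rank_eq_card'
    have hct : Aᵀ = Aᴴ := (Matrix.conjTranspose_eq_transpose_of_trivial A).symm
    rw [hHdef, hct, Matrix.rank_conjTranspose_mul_self, hArank]
  have hGGi : G * G⁻¹ = 1 := Matrix.mul_nonsing_inv _ ((Matrix.isUnit_iff_isUnit_det _).mp hGu)
  have hHiH : H⁻¹ * H = 1 := Matrix.nonsing_inv_mul _ ((Matrix.isUnit_iff_isUnit_det _).mp hHu)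
  -- key products
  have hXM : X * M = H⁻¹ * Aᵀ := by
    rw [hMdef]
    simp only [← Matrix.mul_assoc]
    rw [← hGdef, hGGi, Matrix.one_mul]
  have hUM : U * M = 0 := by
    rw [hMdef]
    simp only [← Matrix.mul_assoc]
    rw [hUXt, Matrix.zero_mul, Matrix.zero_mul, Matrix.zero_mul]
  have hMU : M * U = 0 := by
    rw [hMdef, Matrix.mul_assoc, hAtU, Matrix.mul_zero]
  have hPM : P * M = A * (H⁻¹ * Aᵀ) := by
    rw [hP, Matrix.add_mul, Matrix.smul_mul, hUM, smul_zero, zero_add, Matrix.mul_assoc, hXM]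
  have hPMP : P * M * P = A * X := by
    rw [hPM, hP, Matrix.mul_add, Matrix.mul_smul, Matrix.mul_assoc, Matrix.mul_assoc, hAtU,
      Matrix.mul_zero, Matrix.mul_zero, smul_zero, zero_add,
      show A * (H⁻¹ * Aᵀ) * (A * X) = A * ((H⁻¹ * (Aᵀ * A)) * X) by
        simp only [Matrix.mul_assoc],
      ← hHdef, hHiH, Matrix.one_mul]
  have hPP : P * P = (n : ℝ)⁻¹ • U + α⁻¹ • (A * X) := by
    have h1 : ((n:ℝ)⁻¹ • U) * ((n:ℝ)⁻¹ • U) = (n:ℝ)⁻¹ • U := by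
      rw [Matrix.smul_mul, Matrix.mul_smul, hUU, smul_smul, smul_smul]
      congr 1
      field_simp
    have h2 : ((n:ℝ)⁻¹ • U) * (A * X) = 0 := by
      rw [Matrix.smul_mul, ← Matrix.mul_assoc, hUA, Matrix.zero_mul, smul_zero]
    have h3 : (A * X) * ((n:ℝ)⁻¹ • U) = 0 := by
      rw [Matrix.mul_smul, Matrix.mul_assoc, hXU, Matrix.mul_zero, smul_zero]
    have h4 : (A * X) * (A * X) = α⁻¹ • (A * X) := by
      rw [Matrix.mul_assoc, ← Matrix.mul_assoc X A X, hXA, Matrix.smul_mul,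
        Matrix.mul_smul, Matrix.one_mul]
    rw [hP, Matrix.add_mul, Matrix.mul_add, Matrix.mul_add, h1, h2, h3, h4, add_zero,
      zero_add]
  -- Part 1
  have part1 : P * Φ * P = P := by
    calc P * Φ * P = P * P + ((α-1)/α) • (P * M * P) := by
          rw [hΦ, Matrix.mul_add, Matrix.mul_one, Matrix.mul_smul, Matrix.add_mul,
            Matrix.smul_mul]
      _ = (n : ℝ)⁻¹ • U + (α⁻¹ • (A * X) + ((α-1)/α) • (A * X)) := by
          rw [hPP, hPMP, add_assoc]
      _ = (n : ℝ)⁻¹ • U + A * X := by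
          rw [← add_smul, show α⁻¹ + (α-1)/α = 1 by field_simp; ring, one_smul]
      _ = P := hP.symm
  refine ⟨part1, ?_⟩
  -- transpose products
  have hPt : Pᵀ = (n : ℝ)⁻¹ • U + Xᵀ * Aᵀ := by
    rw [hP, Matrix.transpose_add, Matrix.transpose_smul, hUt, Matrix.transpose_mul]
  have hPtM : Pᵀ * M = α⁻¹ • M := by
    rw [hPt, Matrix.add_mul, Matrix.smul_mul, hUM, smul_zero, zero_add, hMdef,
      show Xᵀ * Aᵀ * (Xᵀ * G⁻¹ * H⁻¹ * Aᵀ) = Xᵀ * ((Aᵀ * Xᵀ) * (G⁻¹ * (H⁻¹ * Aᵀ))) by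
        simp only [Matrix.mul_assoc],
      hAtXt, Matrix.smul_mul, Matrix.mul_smul, Matrix.one_mul]
    congr 1
    simp only [Matrix.mul_assoc]
  have hMPt : M * Pᵀ = α⁻¹ • M := by
    rw [hPt, Matrix.mul_add, Matrix.mul_smul, hMU, smul_zero, zero_add, hMdef,
      show Xᵀ * G⁻¹ * H⁻¹ * Aᵀ * (Xᵀ * Aᵀ) = Xᵀ * G⁻¹ * H⁻¹ * ((Aᵀ * Xᵀ) * Aᵀ) by
        simp only [Matrix.mul_assoc],
      hAtXt, Matrix.smul_mul, Matrix.mul_smul, Matrix.one_mul]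
  have hPtMPt : Pᵀ * M * Pᵀ = (α⁻¹ * α⁻¹) • M := by
    rw [hPtM, Matrix.smul_mul, hMPt, smul_smul]
  have hfactor : (1 : Matrix (Fin n) (Fin n) ℝ) - Φ
      = Pᵀ * ((-((α-1)/α) * α * α) • M) * Pᵀ := by
    rw [hΦ, sub_add_cancel_left, ← neg_smul, Matrix.mul_smul, Matrix.smul_mul, hPtMPt,
      smul_smul]
    congr 1
    field_simp
  -- Part 2
  intro Ψ hΨ hne
  set E : Matrix (Fin n) (Fin n) ℝ := Φ - Ψ with hEdef
  have hEne : E ≠ 0 := sub_ne_zero.mpr (Ne.symm hne)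
  have hPEP : P * E * P = 0 := by
    rw [hEdef, Matrix.mul_sub, Matrix.sub_mul, hΨ, part1, sub_self]
  have hcross : ∑ i, ∑ j, (1 - Φ) i j * E i j = 0 := by
    rw [frob_inner_eq_trace, hfactor]
    exact trace_sandwich P E _ hPEP
  have htot : ∑ i, ∑ j, ((1 - Ψ) i j)^2
      = (∑ i, ∑ j, ((1 - Φ) i j)^2) + (∑ i, ∑ j, (E i j)^2)
        + 2 * ∑ i, ∑ j, (1 - Φ) i j * E i j := by
    have expand : ∀ i j, ((1 - Ψ) i j)^2
        = ((1 - Φ) i j)^2 + (E i j)^2 + 2 * ((1 - Φ) i j * E i j) := by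
      intro i j
      have hij : (1 - Ψ) i j = (1 - Φ) i j + E i j := by
        simp only [hEdef, Matrix.sub_apply, Matrix.add_apply]
        ring
      rw [hij]; ring
    simp only [expand, Finset.sum_add_distrib, Finset.mul_sum]
  have hEpos : 0 < ∑ i, ∑ j, (E i j)^2 := by
    obtain ⟨i, j, hij⟩ : ∃ i j, E i j ≠ 0 := by
      by_contra h
      push_neg at h
      exact hEne (Matrix.ext fun i j => h i j)
    refine Finset.sum_pos'
      (fun i _ => Finset.sum_nonneg fun j _ => sq_nonneg _)
      ⟨i, Finset.mem_univ i, Finset.sum_pos' (fun j _ => sq_nonneg _)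
        ⟨j, Finset.mem_univ j, by positivity⟩⟩
  rw [htot, hcross]
  linarith
end

section
/- Let n ≥ r ≥ 2, let u ∈ ℝⁿ be the all-ones vector, let A be an n×(r−1) real matrix of rank r−1 with uᵀA = 0, let α ≠ 0 be real, and let X be an (r−1)×n real matrix of rank r−1 with X·u = 0 and X·A = (1/α)·I_{r−1}. Then the matrix Φ* = I_n + ((α−1)/α)·Xᵀ·(X·Xᵀ)⁻¹·(Aᵀ·A)⁻¹·Aᵀ acts on reference probability vectors as Φ*·((1/n)·u + A·v) = (1/n)·u + (A + ((α−1)/α)·Xᵀ·(X·Xᵀ)⁻¹)·v for every v ∈ ℝ^{r−1}. In particular, Φ*·P(E) is in general not of the form α·P(E) + (1−α)·(1/n)u, i.e. the Frobenius-minimal Born matrix does not act as a Protourgleichung unless A + ((α−1)/α)Xᵀ(XXᵀ)⁻¹ = αA. -/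
open Matrix

/-- The Frobenius-minimal Born matrix
`Φ* = I + ((α−1)/α)·Xᵀ·(XXᵀ)⁻¹·(AᵀA)⁻¹·Aᵀ` acts on reference probability vectors
`(1/n)·u + A·v` by `Φ*·((1/n)·u + A·v) = (1/n)·u + (A + ((α−1)/α)·Xᵀ·(XXᵀ)⁻¹)·v`,
which is not of Protourgleichung form unless `A + ((α−1)/α)·Xᵀ·(XXᵀ)⁻¹ = α·A`. -/
theorem frobenius_minimal_born_matrix_action
    (n r : ℕ) (hr : 2 ≤ r) (hnr : r ≤ n)
    (u : Fin n → ℝ) (hu : u = fun _ => 1)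
    (A : Matrix (Fin n) (Fin (r - 1)) ℝ) (hArank : A.rank = r - 1)
    (hA : ∀ j, ∑ i, A i j = 0)
    (α : ℝ) (hα : α ≠ 0)
    (X : Matrix (Fin (r - 1)) (Fin n) ℝ) (hXrank : X.rank = r - 1)
    (hXu : X.mulVec u = 0) (hXA : X * A = α⁻¹ • 1)
    (Φ : Matrix (Fin n) (Fin n) ℝ)
    (hΦ : Φ = 1 + ((α - 1) / α) • (Xᵀ * (X * Xᵀ)⁻¹ * (Aᵀ * A)⁻¹ * Aᵀ)) :
    ∀ v : Fin (r - 1) → ℝ,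
      Φ.mulVec ((n : ℝ)⁻¹ • u + A.mulVec v) =
        (n : ℝ)⁻¹ • u + (A + ((α - 1) / α) • (Xᵀ * (X * Xᵀ)⁻¹)).mulVec v := by
  intro v
  -- A has trivial kernel, since α • X is a left inverse of A
  have hAinj : ∀ w : Fin (r - 1) → ℝ, A.mulVec w = 0 → w = 0 := by
    intro w hw
    have h1 : (X * A).mulVec w = 0 := by
      rw [← Matrix.mulVec_mulVec, hw, Matrix.mulVec_zero]
    rw [hXA, Matrix.smul_mulVec, Matrix.one_mulVec] at h1
    rcases smul_eq_zero.mp h1 with h | h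
    · exact absurd h (inv_ne_zero hα)
    · exact h
  -- AᵀA is a unit
  have hGram : IsUnit (Aᵀ * A) := by
    rw [← Matrix.mulVec_injective_iff_isUnit]
    intro w₁ w₂ hw
    have hd : (Aᵀ * A).mulVec (w₁ - w₂) = 0 := by
      rw [Matrix.mulVec_sub, hw, sub_self]
    have hAd : A.mulVec (w₁ - w₂) = 0 := by
      have h2 : dotProduct (w₁ - w₂) ((Aᵀ * A).mulVec (w₁ - w₂)) = 0 := by
        rw [hd, dotProduct_zero]
      rwa [← Matrix.mulVec_mulVec, dotProduct_mulVec, vecMul_transpose,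
        dotProduct_self_eq_zero] at h2
    exact sub_eq_zero.mp (hAinj _ hAd)
  -- Aᵀ u = 0
  have hAu : Aᵀ.mulVec u = 0 := by
    funext j
    simp only [Matrix.mulVec, dotProduct, transpose_apply, hu, mul_one, Pi.zero_apply]
    exact hA j
  have hinv : (Aᵀ * A)⁻¹ * (Aᵀ * A) = 1 :=
    Matrix.nonsing_inv_mul _ ((Matrix.isUnit_iff_isUnit_det _).mp hGram)
  set B := Xᵀ * (X * Xᵀ)⁻¹ with hB
  have key1 : (B * (Aᵀ * A)⁻¹ * Aᵀ).mulVec u = 0 := by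
    rw [← Matrix.mulVec_mulVec, hAu, Matrix.mulVec_zero]
  have key2 : (B * (Aᵀ * A)⁻¹ * Aᵀ) * A = B := by
    rw [Matrix.mul_assoc, Matrix.mul_assoc, hinv, Matrix.mul_one]
  have e1 : (B * (Aᵀ * A)⁻¹ * Aᵀ).mulVec ((n : ℝ)⁻¹ • u + A.mulVec v) = B.mulVec v := by
    rw [Matrix.mulVec_add, Matrix.mulVec_smul, key1, smul_zero, zero_add,
      Matrix.mulVec_mulVec, key2]
  rw [hΦ, Matrix.add_mulVec, Matrix.one_mulVec, Matrix.smul_mulVec, e1,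
    Matrix.add_mulVec, Matrix.smul_mulVec]
  abel
end

section
/- Let w ∈ ℝⁿ with uᵀw = 1 (u ∈ ℝⁿ the all-ones vector), let A be an n×(r−1) real matrix with uᵀA = 0, let α ≠ 0 be real, and let X be an (r−1)×n real matrix with X·w = 0 and X·A = (1/α)·I_{r−1}. Set P = w·uᵀ + A·X. Then the simple Born matrix Φ = I_n + α(α−1)·A·X is a {1}-inverse of P (P·Φ·P = P), and it acts as a Protourgleichung: Φ·(w + A·v) = w + α·(A·v) for every v ∈ ℝ^{r−1}. -/
open Matrix

/-- For a (possibly biased) depolarizing reference device with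
`P = w·uᵀ + A·X`, the simple Born matrix `Φ = I + α(α−1)·A·X` is a `{1}`-inverse
of `P` and acts as a Protourgleichung: `Φ·(w + A·v) = w + α·(A·v)`. -/
theorem simple_born_matrix
    (n r : ℕ)
    (w : Fin n → ℝ) (hw : ∑ i, w i = 1)
    (A : Matrix (Fin n) (Fin (r - 1)) ℝ) (hA : ∀ j, ∑ i, A i j = 0)
    (α : ℝ) (hα : α ≠ 0)
    (X : Matrix (Fin (r - 1)) (Fin n) ℝ)
    (hXw : X.mulVec w = 0) (hXA : X * A = α⁻¹ • 1)
    (P : Matrix (Fin n) (Fin n) ℝ)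
    (hP : P = Matrix.vecMulVec w (fun _ => 1) + A * X)
    (Φ : Matrix (Fin n) (Fin n) ℝ)
    (hΦ : Φ = 1 + (α * (α - 1)) • (A * X)) :
    P * Φ * P = P ∧
    ∀ v : Fin (r - 1) → ℝ,
      Φ.mulVec (w + A.mulVec v) = w + α • A.mulVec v := by
  set W := Matrix.vecMulVec w (fun _ : Fin n => (1:ℝ)) with hWdef
  set M := A * X with hMdef
  have hWW : W * W = W := by
    ext i j
    simp only [hWdef, Matrix.mul_apply, Matrix.vecMulVec_apply, mul_one]
    rw [← Finset.mul_sum, hw, mul_one]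
  have hWA : W * A = 0 := by
    ext i j
    simp only [hWdef, Matrix.mul_apply, Matrix.vecMulVec_apply, mul_one,
      Matrix.zero_apply]
    rw [← Finset.mul_sum, hA j, mul_zero]
  have hXW : X * W = 0 := by
    ext i j
    simp only [hWdef, Matrix.mul_apply, Matrix.vecMulVec_apply, mul_one,
      Matrix.zero_apply]
    have := congrFun hXw i
    simpa [Matrix.mulVec, dotProduct] using this
  have hWM : W * M = 0 := by
    rw [hMdef, ← Matrix.mul_assoc, hWA, Matrix.zero_mul]
  have hMW : M * W = 0 := by
    rw [hMdef, Matrix.mul_assoc, hXW, Matrix.mul_zero]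
  have hMM : M * M = α⁻¹ • M := by
    rw [hMdef, Matrix.mul_assoc A X (A * X), ← Matrix.mul_assoc X A X, hXA,
      Matrix.smul_mul, Matrix.one_mul, Matrix.mul_smul]
  have hc : α * (α - 1) * α⁻¹ = α - 1 := by field_simp
  have hPΦ : P * Φ = W + α • M := by
    rw [hP, hΦ, Matrix.add_mul, Matrix.mul_add, Matrix.mul_add, Matrix.mul_one,
      Matrix.mul_one, Matrix.mul_smul, Matrix.mul_smul, hWM, hMM, smul_zero,
      smul_smul, hc]
    module
  constructor
  · rw [hPΦ, hP]
    simp only [Matrix.add_mul, Matrix.mul_add, Matrix.smul_mul, hWW, hWM, hMW, hMM,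
      smul_add, smul_zero, smul_smul, mul_inv_cancel₀ hα, one_smul, add_zero, zero_add]
  · intro v
    have hMw : M.mulVec w = 0 := by
      rw [hMdef, ← Matrix.mulVec_mulVec, hXw, Matrix.mulVec_zero]
    have hXAv : X.mulVec (A.mulVec v) = α⁻¹ • v := by
      rw [Matrix.mulVec_mulVec, hXA, Matrix.smul_mulVec, Matrix.one_mulVec]
    have hMAv : M.mulVec (A.mulVec v) = α⁻¹ • A.mulVec v := by
      rw [hMdef, ← Matrix.mulVec_mulVec, hXAv]
      simp [Matrix.mulVec_smul]
    rw [hΦ, Matrix.add_mulVec, Matrix.one_mulVec, Matrix.smul_mulVec,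
      Matrix.mulVec_add, hMw, hMAv, zero_add, smul_smul, hc]
    module
end

section
/- Let d ≥ 2, let S₁, …, Sₙ be d×d real symmetric matrices each with trace 1 and with trace of its square equal to 1 (tr(Sₘ²) = 1, corresponding to pure states in real quantum theory), let t₁, …, tₙ be real numbers with ∑ₘ tₘ·Sₘ = I_d, and let α be a nonzero real number. Suppose the d²×d² real matrix C with entries C_{(i,j),(k,l)} = ∑ₘ tₘ · Sₘ[i,j] · Sₘ[k,l] satisfies C = (1/α)·Π + (1 − 1/α)·(1/d)·J, where Π is the d²×d² matrix (1/2)·(I_{d²} + SWAP) with SWAP_{(i,j),(k,l)} = δ_{il}·δ_{jk}, and J_{(i,j),(k,l)} = δ_{ij}·δ_{kl}. Then α = (d + 2)/2. -/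
open Matrix

/-- For a pure weight-morphophoric reference device in real
quantum theory (real symmetric post-measurement states `Sₘ` with `tr Sₘ = 1` and
`tr Sₘ² = 1`, effects `tₘ·Sₘ` resolving the identity), if the channel operator
`C_{(i,j),(k,l)} = ∑ₘ tₘ·Sₘ[i,j]·Sₘ[k,l]` is depolarizing with respect to the
symmetric projector `Π = (1/2)(I + SWAP)`, i.e.
`C = (1/α)·Π + (1 − 1/α)·(1/d)·J`, then `α = (d + 2)/2`. -/
theorem real_pure_weight_morphophoric_alpha
    (d n : ℕ) (hd : 2 ≤ d)
    (S : Fin n → Matrix (Fin d) (Fin d) ℝ)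
    (hsymm : ∀ m, (S m)ᵀ = S m)
    (htr : ∀ m, (S m).trace = 1)
    (hpure : ∀ m, (S m * S m).trace = 1)
    (t : Fin n → ℝ) (hres : ∑ m, t m • S m = 1)
    (α : ℝ) (hα : α ≠ 0)
    (C : Matrix (Fin d × Fin d) (Fin d × Fin d) ℝ)
    (hC : C = Matrix.of fun p q => ∑ m, t m * S m p.1 p.2 * S m q.1 q.2)
    (SWAP : Matrix (Fin d × Fin d) (Fin d × Fin d) ℝ)
    (hSWAP : SWAP = Matrix.of fun p q : Fin d × Fin d =>
      if p.1 = q.2 ∧ p.2 = q.1 then 1 else 0)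
    (Psym : Matrix (Fin d × Fin d) (Fin d × Fin d) ℝ)
    (hPsym : Psym = (2 : ℝ)⁻¹ • (1 + SWAP))
    (J : Matrix (Fin d × Fin d) (Fin d × Fin d) ℝ)
    (hJ : J = Matrix.of fun p q : Fin d × Fin d =>
      (if p.1 = p.2 then 1 else 0) * (if q.1 = q.2 then 1 else 0))
    (hdep : C = α⁻¹ • Psym + (1 - α⁻¹) • ((d : ℝ)⁻¹ • J)) :
    α = (d + 2) / 2 := by
  have hd0 : (d : ℝ) ≠ 0 := by positivity
  have hs : ∀ m (i j : Fin d), S m j i = S m i j := fun m i j =>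
    congrFun (congrFun (hsymm m) i) j
  -- sum of weights is d
  have hsum : ∑ m, t m = (d : ℝ) := by
    have h := congrArg Matrix.trace hres
    simpa [Matrix.trace_sum, Matrix.trace_smul, htr, Matrix.trace_one,
      smul_eq_mul] using h
  -- trace of C
  have hCtr : C.trace = (d : ℝ) := by
    rw [hC, Matrix.trace]
    simp only [Matrix.diag, Matrix.of_apply]
    rw [Finset.sum_comm]
    have : ∀ m, ∑ p : Fin d × Fin d, t m * S m p.1 p.2 * S m p.1 p.2 = t m := by
      intro m
      have htr2 : (S m * S m).trace = ∑ i, ∑ j, S m i j * S m i j := by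
        rw [Matrix.trace]
        refine Finset.sum_congr rfl fun i _ => ?_
        simp only [Matrix.diag, Matrix.mul_apply]
        exact Finset.sum_congr rfl fun j _ => by rw [hs m j i]
      calc ∑ p : Fin d × Fin d, t m * S m p.1 p.2 * S m p.1 p.2
          = t m * ∑ i, ∑ j, S m i j * S m i j := by
            rw [Fintype.sum_prod_type, Finset.mul_sum]
            refine Finset.sum_congr rfl fun i _ => ?_
            rw [Finset.mul_sum]
            exact Finset.sum_congr rfl fun j _ => by ring
        _ = t m * 1 := by rw [← htr2, hpure m]
        _ = t m := mul_one _
    rw [Finset.sum_congr rfl fun m _ => this m, hsum]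
  -- traces of SWAP, J, Psym
  have hSWtr : SWAP.trace = (d : ℝ) := by
    rw [hSWAP, Matrix.trace]
    simp only [Matrix.diag, Matrix.of_apply]
    rw [Fintype.sum_prod_type]
    simp [eq_comm]
  have hJtr : J.trace = (d : ℝ) := by
    rw [hJ, Matrix.trace]
    simp only [Matrix.diag, Matrix.of_apply]
    rw [Fintype.sum_prod_type]
    simp
  have hPtr : Psym.trace = (2 : ℝ)⁻¹ * ((d : ℝ) * d + d) := by
    rw [hPsym, Matrix.trace_smul, Matrix.trace_add, Matrix.trace_one, hSWtr]
    simp [Fintype.card_prod, smul_eq_mul]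
  -- take trace of the depolarizing identity
  have heq : (d : ℝ) = α⁻¹ * ((2 : ℝ)⁻¹ * ((d : ℝ) * d + d))
      + (1 - α⁻¹) * ((d : ℝ)⁻¹ * d) := by
    have h := congrArg Matrix.trace hdep
    rw [hCtr, Matrix.trace_add, Matrix.trace_smul, Matrix.trace_smul,
      Matrix.trace_smul, hPtr, hJtr] at h
    simpa [smul_eq_mul, mul_assoc] using h
  rw [inv_mul_cancel₀ hd0, mul_one] at heq
  have hd1 : (d : ℝ) - 1 ≠ 0 := by
    have : (2 : ℝ) ≤ (d : ℝ) := by exact_mod_cast hd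
    linarith
  have hβ : α * α⁻¹ = 1 := mul_inv_cancel₀ hα
  have hkey : ((d : ℝ) - 1) * (α * 2) = ((d : ℝ) - 1) * ((d : ℝ) + 2) := by
    linear_combination (2 * α) * heq + ((d : ℝ) * (d : ℝ) + (d : ℝ) - 2) * hβ
  have h2 : α * 2 = (d : ℝ) + 2 := mul_left_cancel₀ hd1 hkey
  field_simp
  linarith [h2]
end
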